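/- There exists a connected simple graph G on 10 vertices with diameter 2 such that no two real 10×10 matrices A, B, each complying with G, satisfy AB = (1/10)·𝟙𝟙ᵀ. Consequently, the definitive consensus conjecture is false: the diameter lower bound for linear consensus protocols is not always tight. -/

import Mathlib

/-- A real `N × N` matrix complies with the graph `G` when its off-diagonal
entries vanish outside the edges of `G`. -/
def SimpleGraph.Complies {N : ℕ} (G : SimpleGraph (Fin N))
    (A : Matrix (Fin N) (Fin N) ℝ) : Prop :=
  ∀ i j : Fin N, i ≠ j → ¬ G.Adj i j → A i j = 0

private theorem sum_univ_nine' {β : Type*} [AddCommMonoid β] (f : Fin 9 → β) :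
    ∑ i, f i = f 0 + f 1 + f 2 + f 3 + f 4 + f 5 + f 6 + f 7 + f 8 := by
  rw [Fin.sum_univ_castSucc, Fin.sum_univ_eight]
  rfl

private theorem sum_univ_ten' {β : Type*} [AddCommMonoid β] (f : Fin 10 → β) :
    ∑ i, f i = f 0 + f 1 + f 2 + f 3 + f 4 + f 5 + f 6 + f 7 + f 8 + f 9 := by
  rw [Fin.sum_univ_castSucc, sum_univ_nine']
  rfl

/-- The edge list of the counterexample graph. -/
def ceEdges : List (ℕ × ℕ) :=
  [(0, 4), (0, 7), (0, 8), (1, 3), (1, 7), (1, 9), (2, 3), (2, 6), (2, 8), (3, 4), (3, 8), (3, 9), (4, 6), (4, 8), (5, 8), (5, 9), (6, 9), (7, 8), (7, 9)]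

/-- The counterexample graph on 10 vertices. -/
def ceGraph : SimpleGraph (Fin 10) where
  Adj i j := (i.1, j.1) ∈ ceEdges ∨ (j.1, i.1) ∈ ceEdges
  symm := ⟨fun i j h => Or.symm h⟩
  loopless := ⟨fun i =>
    (by decide : ∀ j : Fin 10, ¬((j.1, j.1) ∈ ceEdges ∨ (j.1, j.1) ∈ ceEdges)) i⟩

instance : DecidableRel ceGraph.Adj :=
  fun i j => inferInstanceAs (Decidable (_ ∨ _))

lemma ceGraph_edist_le_two (u v : Fin 10) : ceGraph.edist u v ≤ 2 := by
  have key : ∀ u v : Fin 10, u = v ∨ ceGraph.Adj u v ∨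
      ∃ w, ceGraph.Adj u w ∧ ceGraph.Adj w v := by decide
  rcases key u v with rfl | h | ⟨w, h1, h2⟩
  · simp [SimpleGraph.edist_self]
  · have := SimpleGraph.edist_le h.toWalk
    simp only [SimpleGraph.Adj.toWalk, SimpleGraph.Walk.length_cons,
      SimpleGraph.Walk.length_nil, Nat.cast_one, zero_add] at this
    exact this.trans one_le_two
  · have := SimpleGraph.edist_le
      (SimpleGraph.Walk.cons h1 (SimpleGraph.Walk.cons h2 SimpleGraph.Walk.nil))
    simpa using this

lemma ceGraph_edist57 : ceGraph.edist 5 7 = 2 := by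
  have hle := ceGraph_edist_le_two 5 7
  have hne : ceGraph.edist 5 7 ≠ ⊤ := by
    intro h; rw [h] at hle
    exact absurd hle (by simp)
  have h0 : ceGraph.edist 5 7 ≠ 0 := by
    rw [Ne, SimpleGraph.edist_eq_zero_iff]
    decide
  have h1 : ceGraph.edist 5 7 ≠ 1 := by
    rw [Ne, SimpleGraph.edist_eq_one_iff_adj]
    decide
  lift ceGraph.edist 5 7 to ℕ using hne with n hn
  norm_cast at hle h0 h1 ⊢
  omega

lemma ceGraph_ediam : ceGraph.ediam = 2 := by
  refine le_antisymm (SimpleGraph.ediam_le_of_edist_le ceGraph_edist_le_two) ?_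
  have h := SimpleGraph.edist_le_ediam (G := ceGraph) (u := 5) (v := 7)
  rwa [ceGraph_edist57] at h

lemma ceGraph_connected : ceGraph.Connected := by
  by_contra h
  have h2 := SimpleGraph.ediam_eq_top_of_not_connected h
  rw [ceGraph_ediam] at h2
  exact absurd h2 (by simp)

/-- The definitive consensus conjecture is false: there is a connected graph on
10 vertices of diameter 2 on which no product of two compliant matrices equals
`(1/10)·𝟙𝟙ᵀ`. -/
theorem definitive_consensus_conjecture_false :
    ∃ G : SimpleGraph (Fin 10), G.Connected ∧ G.diam = 2 ∧
      ∀ A B : Matrix (Fin 10) (Fin 10) ℝ, G.Complies A → G.Complies B →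
        A * B ≠ Matrix.of (fun _ _ => (10 : ℝ)⁻¹) := by
  refine ⟨ceGraph, ceGraph_connected, ?_, ?_⟩
  · rw [SimpleGraph.diam, ceGraph_ediam]
    rfl
  intro A B hA hB hAB
  have E1 : A 5 8 * B 8 0 = (10:ℝ)⁻¹ := by
    have h' : (A * B) 5 0 = (10:ℝ)⁻¹ := by rw [hAB]; rfl
    rw [Matrix.mul_apply, sum_univ_ten'] at h'
    rw [hA 5 0 (by decide) (by decide), hA 5 1 (by decide) (by decide), hA 5 2 (by decide) (by decide), hA 5 3 (by decide) (by decide), hA 5 4 (by decide) (by decide), hB 5 0 (by decide) (by decide), hA 5 6 (by decide) (by decide), hA 5 7 (by decide) (by decide), hB 9 0 (by decide) (by decide)] at h'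
    linarith [h']

  have E2 : A 2 8 * B 8 0 = (10:ℝ)⁻¹ := by
    have h' : (A * B) 2 0 = (10:ℝ)⁻¹ := by rw [hAB]; rfl
    rw [Matrix.mul_apply, sum_univ_ten'] at h'
    rw [hA 2 0 (by decide) (by decide), hA 2 1 (by decide) (by decide), hB 2 0 (by decide) (by decide), hB 3 0 (by decide) (by decide), hA 2 4 (by decide) (by decide), hA 2 5 (by decide) (by decide), hB 6 0 (by decide) (by decide), hA 2 7 (by decide) (by decide), hA 2 9 (by decide) (by decide)] at h'
    linarith [h']

  have E3 : A 2 8 * B 8 7 = (10:ℝ)⁻¹ := by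
    have h' : (A * B) 2 7 = (10:ℝ)⁻¹ := by rw [hAB]; rfl
    rw [Matrix.mul_apply, sum_univ_ten'] at h'
    rw [hA 2 0 (by decide) (by decide), hA 2 1 (by decide) (by decide), hB 2 7 (by decide) (by decide), hB 3 7 (by decide) (by decide), hA 2 4 (by decide) (by decide), hA 2 5 (by decide) (by decide), hB 6 7 (by decide) (by decide), hA 2 7 (by decide) (by decide), hA 2 9 (by decide) (by decide)] at h'
    linarith [h']

  have E4 : A 5 9 * B 9 1 = (10:ℝ)⁻¹ := by
    have h' : (A * B) 5 1 = (10:ℝ)⁻¹ := by rw [hAB]; rfl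
    rw [Matrix.mul_apply, sum_univ_ten'] at h'
    rw [hA 5 0 (by decide) (by decide), hA 5 1 (by decide) (by decide), hA 5 2 (by decide) (by decide), hA 5 3 (by decide) (by decide), hA 5 4 (by decide) (by decide), hB 5 1 (by decide) (by decide), hA 5 6 (by decide) (by decide), hA 5 7 (by decide) (by decide), hB 8 1 (by decide) (by decide)] at h'
    linarith [h']

  have E5 : A 6 9 * B 9 1 = (10:ℝ)⁻¹ := by
    have h' : (A * B) 6 1 = (10:ℝ)⁻¹ := by rw [hAB]; rfl
    rw [Matrix.mul_apply, sum_univ_ten'] at h'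
    rw [hA 6 0 (by decide) (by decide), hA 6 1 (by decide) (by decide), hB 2 1 (by decide) (by decide), hA 6 3 (by decide) (by decide), hB 4 1 (by decide) (by decide), hA 6 5 (by decide) (by decide), hB 6 1 (by decide) (by decide), hA 6 7 (by decide) (by decide), hA 6 8 (by decide) (by decide)] at h'
    linarith [h']

  have E6 : A 6 9 * B 9 7 = (10:ℝ)⁻¹ := by
    have h' : (A * B) 6 7 = (10:ℝ)⁻¹ := by rw [hAB]; rfl
    rw [Matrix.mul_apply, sum_univ_ten'] at h'
    rw [hA 6 0 (by decide) (by decide), hA 6 1 (by decide) (by decide), hB 2 7 (by decide) (by decide), hA 6 3 (by decide) (by decide), hB 4 7 (by decide) (by decide), hA 6 5 (by decide) (by decide), hB 6 7 (by decide) (by decide), hA 6 7 (by decide) (by decide), hA 6 8 (by decide) (by decide)] at h'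
    linarith [h']

  have E7 : A 5 8 * B 8 7 + A 5 9 * B 9 7 = (10:ℝ)⁻¹ := by
    have h' : (A * B) 5 7 = (10:ℝ)⁻¹ := by rw [hAB]; rfl
    rw [Matrix.mul_apply, sum_univ_ten'] at h'
    rw [hA 5 0 (by decide) (by decide), hA 5 1 (by decide) (by decide), hA 5 2 (by decide) (by decide), hA 5 3 (by decide) (by decide), hA 5 4 (by decide) (by decide), hB 5 7 (by decide) (by decide), hA 5 6 (by decide) (by decide), hA 5 7 (by decide) (by decide)] at h'
    linarith [h']

  have hc : (10:ℝ)⁻¹ ≠ 0 := by norm_num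
  have hb1 : B 8 0 ≠ 0 := by
    intro h; rw [h, mul_zero] at E1; exact hc E1.symm
  have hb3 : B 9 1 ≠ 0 := by
    intro h; rw [h, mul_zero] at E4; exact hc E4.symm
  have ha12 : A 5 8 = A 2 8 := mul_right_cancel₀ hb1 (E1.trans E2.symm)
  have ha34 : A 5 9 = A 6 9 := mul_right_cancel₀ hb3 (E4.trans E5.symm)
  have k1 : A 5 8 * B 8 7 = (10:ℝ)⁻¹ := by rw [ha12]; exact E3
  have k2 : A 5 9 * B 9 7 = (10:ℝ)⁻¹ := by rw [ha34]; exact E6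
  rw [k1, k2] at E7
  norm_num at E7
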